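/- arXiv:2007.04493 — 5 statements merged into one kernel-verified Lean document; each statement's English description precedes it below -/
import Mathlib

section
/- Let φ be a continuous function on the unit sphere S^{n-1} ⊂ ℝⁿ, and let u* : B̄₁ → ℝ be a strictly convex continuous function on the closed unit ball satisfying u*(ξ) = −φ(ξ) for all ξ ∈ ∂B₁. Let u : ℝⁿ → ℝ be the Legendre (Fenchel) transform of u*, i.e. u(x) = sup_{ξ ∈ B̄₁} (x·ξ − u*(ξ)). Then u(x) − |x| − φ(x/|x|) → 0 uniformly as |x| → ∞. -/
open Filter Real Set Metric Bornology

noncomputable section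

abbrev Esp (n : ℕ) := EuclideanSpace ℝ (Fin n)

/-- i-th partial derivative of u at x. -/
def Egrad (n : ℕ) (u : Esp n → ℝ) (x : Esp n) : Fin n → ℝ :=
  fun i => fderiv ℝ u x (EuclideanSpace.single i 1)

/-- |Du(x)|². -/
def EgradSq (n : ℕ) (u : Esp n → ℝ) (x : Esp n) : ℝ :=
  ∑ i, (Egrad n u x i) ^ 2

/-- Hessian matrix D²u(x). -/
def Ehess (n : ℕ) (u : Esp n → ℝ) (x : Esp n) : Matrix (Fin n) (Fin n) ℝ :=
  fun i j => fderiv ℝ (fun y => fderiv ℝ u y (EuclideanSpace.single j 1)) x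
    (EuclideanSpace.single i 1)

/-- Curvature matrix A = (1/w) γ D²u γ. -/
def curvMat (n : ℕ) (u : Esp n → ℝ) (x : Esp n) : Matrix (Fin n) (Fin n) ℝ :=
  let Du := Egrad n u x
  let w := Real.sqrt (1 - EgradSq n u x)
  let γ : Matrix (Fin n) (Fin n) ℝ :=
    fun i k => (if i = k then (1 : ℝ) else 0) + Du i * Du k / (w * (1 + w))
  w⁻¹ • (γ * Ehess n u x * γ)

open Classical in
/-- Eigenvalues of a symmetric real matrix (junk value if not symmetric). -/
def matEigs {m : ℕ} (A : Matrix (Fin m) (Fin m) ℝ) : Fin m → ℝ :=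
  if h : A.IsHermitian then h.eigenvalues else 0

/-- Principal curvatures κ[M_u](x). -/
def princCurv (n : ℕ) (u : Esp n → ℝ) (x : Esp n) : Fin n → ℝ :=
  matEigs (curvMat n u x)

/-- k-th elementary symmetric polynomial σ_k. -/
def esymm (n k : ℕ) (κ : Fin n → ℝ) : ℝ :=
  (Finset.powersetCard k (Finset.univ : Finset (Fin n))).sum fun s => s.prod κ

/-- Gårding cone Γ_k. -/
def inGammaK (n k : ℕ) (κ : Fin n → ℝ) : Prop :=
  ∀ m : ℕ, 1 ≤ m → m ≤ k → 0 < esymm n m κ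

/-- Position vector X = (x, u(x)) ∈ ℝ^{n+1}. -/
def posVec (n : ℕ) (u : Esp n → ℝ) (x : Esp n) : Fin (n + 1) → ℝ :=
  Fin.snoc (fun i => x i) (u x)

/-- Upward unit timelike normal ν = (Du, 1)/w ∈ ℝ^{n+1}. -/
def normalVec (n : ℕ) (u : Esp n → ℝ) (x : Esp n) : Fin (n + 1) → ℝ :=
  Fin.snoc (fun i => Egrad n u x i / Real.sqrt (1 - EgradSq n u x))
    (1 / Real.sqrt (1 - EgradSq n u x))

/-- The hyperboloid ℍⁿ ⊂ ℝ^{n,1}. -/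
def hyperboloid (n : ℕ) : Set (Fin (n + 1) → ℝ) :=
  {ν | (∑ i : Fin n, (ν i.castSucc) ^ 2) - (ν (Fin.last n)) ^ 2 = -1 ∧ 0 < ν (Fin.last n)}


/-- asymptotics of the Legendre transform of a strictly convex
function on the closed unit ball with boundary values -φ. -/
theorem stmt3 (n : ℕ) (hn : 1 ≤ n)
    (φ : Esp n → ℝ) (hφ : ContinuousOn φ (sphere (0 : Esp n) 1))
    (ustar : Esp n → ℝ)
    (hcont : ContinuousOn ustar (closedBall (0 : Esp n) 1))
    (hconv : StrictConvexOn ℝ (closedBall (0 : Esp n) 1) ustar)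
    (hbdry : ∀ ξ : Esp n, ‖ξ‖ = 1 → ustar ξ = -φ ξ)
    (u : Esp n → ℝ)
    (hu : ∀ x : Esp n,
      u x = sSup ((fun ξ : Esp n => (inner ℝ x ξ : ℝ) - ustar ξ) '' closedBall (0 : Esp n) 1)) :
    Tendsto (fun x : Esp n => u x - ‖x‖ - φ (‖x‖⁻¹ • x)) (cocompact (Esp n)) (nhds 0) := by
  rw [Metric.tendsto_nhds]
  intro ε hε
  have hK : IsCompact (closedBall (0 : Esp n) 1) := isCompact_closedBall _ _
  have huc : UniformContinuousOn ustar (closedBall (0 : Esp n) 1) :=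
    hK.uniformContinuousOn_of_continuous hcont
  rw [Metric.uniformContinuousOn_iff] at huc
  obtain ⟨δ, hδ, hδ'⟩ := huc (ε / 2) (by positivity)
  obtain ⟨M, hM⟩ := hK.exists_bound_of_continuousOn hcont
  set R : ℝ := max 1 (4 * M / δ ^ 2) with hR
  filter_upwards [tendsto_norm_cocompact_atTop.eventually_ge_atTop R] with x hx
  have hr1 : (1 : ℝ) ≤ ‖x‖ := le_trans (le_max_left _ _) hx
  have hr0 : (0 : ℝ) < ‖x‖ := lt_of_lt_of_le one_pos hr1
  set r := ‖x‖ with hrdef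
  set θ := ‖x‖⁻¹ • x with hθdef
  have hθ : ‖θ‖ = 1 := by
    rw [hθdef, norm_smul, norm_inv, norm_norm]
    field_simp
    exact div_self (ne_of_gt hr0)
  have hθK : θ ∈ closedBall (0 : Esp n) 1 := by
    simp [mem_closedBall, dist_zero_right, hθ]
  have hxθ : x = r • θ := by
    rw [hθdef, hrdef, smul_smul, mul_inv_cancel₀ (ne_of_gt hr0), one_smul]
  have hScont : ContinuousOn (fun ξ : Esp n => (inner ℝ x ξ : ℝ) - ustar ξ)
      (closedBall (0 : Esp n) 1) :=
    ((continuous_const.inner continuous_id).continuousOn).sub hcont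
  have hbdd : BddAbove ((fun ξ : Esp n => (inner ℝ x ξ : ℝ) - ustar ξ) ''
      closedBall (0 : Esp n) 1) :=
    (hK.image_of_continuousOn hScont).bddAbove
  have hinner : (inner ℝ x θ : ℝ) = r := by
    rw [hθdef, real_inner_smul_right, real_inner_self_eq_norm_mul_norm]
    field_simp [hrdef]
    exact hrdef.symm
  have hlow : r - ustar θ ≤ u x := by
    rw [hu]
    refine le_csSup hbdd ⟨θ, hθK, ?_⟩
    show (inner ℝ x θ : ℝ) - ustar θ = r - ustar θ
    rw [hinner]
  have hMθ := abs_le.mp (hM θ hθK)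
  have hupp : u x ≤ r - ustar θ + ε / 2 := by
    rw [hu]
    refine csSup_le ⟨_, ⟨θ, hθK, rfl⟩⟩ ?_
    rintro a ⟨ξ, hξ, rfl⟩
    have hξn : ‖ξ‖ ≤ 1 := by simpa [dist_zero_right] using hξ
    have hiθξ : (inner ℝ x ξ : ℝ) = r * inner ℝ θ ξ := by rw [hxθ, real_inner_smul_left]
    have hMξ := abs_le.mp (hM ξ hξ)
    simp only [hiθξ]
    by_cases hd : dist ξ θ < δ
    · have h1 : ustar θ - ustar ξ ≤ ε / 2 := by
        have h := hδ' ξ hξ θ hθK hd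
        rw [Real.dist_eq] at h
        have := (abs_le.mp h.le).1
        linarith
      have h2 : (inner ℝ θ ξ : ℝ) ≤ 1 := by
        calc (inner ℝ θ ξ : ℝ) ≤ ‖θ‖ * ‖ξ‖ := real_inner_le_norm θ ξ
        _ ≤ 1 := by rw [hθ, one_mul]; exact hξn
      nlinarith
    · push_neg at hd
      have h4 : δ ≤ ‖ξ - θ‖ := by rwa [dist_eq_norm] at hd
      have h3 : ‖ξ - θ‖ ^ 2 = ‖ξ‖ ^ 2 - 2 * inner ℝ ξ θ + ‖θ‖ ^ 2 := by
        rw [@norm_sub_sq_real]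
      have h2 : (inner ℝ θ ξ : ℝ) ≤ 1 - δ ^ 2 / 2 := by
        have hc := real_inner_comm ξ θ
        nlinarith [pow_le_pow_left₀ hδ.le h4 2, pow_le_pow_left₀ (norm_nonneg ξ) hξn 2, hθ]
      have hrR : 4 * M / δ ^ 2 ≤ r := le_trans (le_max_right _ _) hx
      have h5 : 4 * M ≤ r * δ ^ 2 := by
        rw [div_le_iff₀ (by positivity)] at hrR
        linarith
      nlinarith [sq_nonneg δ]
  have hφθ : φ θ = -ustar θ := by rw [hbdry θ hθ]; ring
  rw [Real.dist_eq, sub_zero, hφθ]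
  rw [abs_lt]
  constructor <;> linarith

end
end

section
/- Let Ω ⊂ ℝⁿ be a bounded open set and let u, ū, Ψ : Ω → ℝ be C¹ functions that are strictly spacelike (|Du|, |Dū|, |DΨ| < 1 on Ω). Assume u is strictly convex, u < ū in Ω, and Ψ > ū near ∂Ω. Then for every x in the set {u > Ψ} = {y ∈ Ω : u(y) > Ψ(y)}, one has 1/√(1−|Du(x)|²) ≤ (1/(u(x)−Ψ(x))) · sup_{{u>Ψ}} (ū−Ψ)/√(1−|DΨ|²). -/
open Filter Real Set Metric Bornology

noncomputable section

open Topology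

lemma support_lemma (n : ℕ) {Ω : Set (Esp n)} {u : Esp n → ℝ}
    (hconv : ConvexOn ℝ Ω u) {x₀ y : Esp n}
    (hu : HasFDerivAt u (fderiv ℝ u x₀) x₀)
    (hx : x₀ ∈ Ω) (hy : y ∈ Ω) :
    u x₀ + fderiv ℝ u x₀ (y - x₀) ≤ u y := by
  set d := y - x₀ with hd
  set F := fderiv ℝ u x₀ with hF
  set φ : ℝ → ℝ := fun t => u (x₀ + t • d) with hφdef
  have hline : HasDerivAt (fun t : ℝ => x₀ + t • d) d 0 := by
    simpa using ((hasDerivAt_id (0:ℝ)).smul_const d).const_add x₀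
  have hpt : x₀ + (0:ℝ) • d = x₀ := by simp
  have hφ : HasDerivAt φ (F d) 0 := by
    have hu' : HasFDerivAt u F (x₀ + (0:ℝ) • d) := by rw [hpt]; exact hu
    exact hu'.comp_hasDerivAt 0 hline
  have hmono : (𝓝[>] (0:ℝ)) ≤ 𝓝[≠] (0:ℝ) :=
    nhdsWithin_mono 0 (fun t ht => ne_of_gt ht)
  have hT : Tendsto (slope φ 0) (𝓝[>] (0:ℝ)) (𝓝 (F d)) :=
    (hasDerivAt_iff_tendsto_slope.1 hφ).mono_left hmono
  have hbound : ∀ᶠ t in 𝓝[>] (0:ℝ), slope φ 0 t ≤ u y - u x₀ := by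
    filter_upwards [Ioc_mem_nhdsGT_of_mem (Set.mem_Ico.2 ⟨le_rfl, one_pos⟩)] with t ht
    obtain ⟨ht0, ht1⟩ := ht
    have hcx := hconv.2 hx hy (by linarith : (0:ℝ) ≤ 1 - t) ht0.le (by ring)
    have hxt : (1-t) • x₀ + t • y = x₀ + t • d := by
      rw [hd]; rw [smul_sub]; module
    rw [hxt] at hcx
    have hφ0 : φ 0 = u x₀ := by simp [hφdef]
    have hs : slope φ 0 t = (φ t - φ 0) / t := by simp [slope_def_field]
    rw [hs, hφ0, div_le_iff₀ ht0]
    calc φ t - u x₀ ≤ ((1-t) * u x₀ + t * u y) - u x₀ := by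
          simpa [hφdef] using hcx
      _ = (u y - u x₀) * t := by ring
  have := le_of_tendsto hT hbound
  linarith

/-- local gradient estimate of Bayard–Schnürer for strictly convex
spacelike graphs. -/
theorem stmt7 (n : ℕ) (hn : 1 ≤ n)
    (Ω : Set (Esp n)) (hΩo : IsOpen Ω) (hΩb : IsBounded Ω)
    (u ub Ψ : Esp n → ℝ)
    (huC1 : ContDiffOn ℝ 1 u Ω) (hubC1 : ContDiffOn ℝ 1 ub Ω) (hΨC1 : ContDiffOn ℝ 1 Ψ Ω)
    (husp : ∀ x ∈ Ω, EgradSq n u x < 1)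
    (hubsp : ∀ x ∈ Ω, EgradSq n ub x < 1)
    (hΨsp : ∀ x ∈ Ω, EgradSq n Ψ x < 1)
    (huconv : StrictConvexOn ℝ Ω u)
    (hult : ∀ x ∈ Ω, u x < ub x)
    (hnear : ∃ K : Set (Esp n), IsCompact K ∧ K ⊆ Ω ∧ ∀ x ∈ Ω \ K, ub x < Ψ x) :
    ∀ x ∈ Ω, Ψ x < u x →
      1 / Real.sqrt (1 - EgradSq n u x) ≤
        (1 / (u x - Ψ x)) *
          sSup ((fun y => (ub y - Ψ y) / Real.sqrt (1 - EgradSq n Ψ y)) ''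
            {y ∈ Ω | Ψ y < u y}) := by
  obtain ⟨K, hKc, hKΩ, hKnear⟩ := hnear
  intro x₀ hx₀ hΨx₀
  -- basic continuity facts
  have huc : ContinuousOn u Ω := huC1.continuousOn
  have hubc : ContinuousOn ub Ω := hubC1.continuousOn
  have hΨc : ContinuousOn Ψ Ω := hΨC1.continuousOn
  have hΨfd : ContinuousOn (fderiv ℝ Ψ) Ω :=
    hΨC1.continuousOn_fderiv_of_isOpen hΩo le_rfl
  have hEgradSqΨ : ContinuousOn (fun y => EgradSq n Ψ y) Ω := by
    unfold EgradSq Egrad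
    apply continuousOn_finset_sum
    intro i _
    exact (hΨfd.clm_apply continuousOn_const).pow 2
  have hsqrtΨ : ContinuousOn (fun y => Real.sqrt (1 - EgradSq n Ψ y)) Ω :=
    Real.continuous_sqrt.comp_continuousOn (continuousOn_const.sub hEgradSqΨ)
  have hsqrtΨpos : ∀ y ∈ Ω, 0 < Real.sqrt (1 - EgradSq n Ψ y) := fun y hy =>
    Real.sqrt_pos.2 (by linarith [hΨsp y hy])
  set f : Esp n → ℝ := fun y => (ub y - Ψ y) / Real.sqrt (1 - EgradSq n Ψ y) with hfdef
  have hfc : ContinuousOn f Ω :=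
    (hubc.sub hΨc).div hsqrtΨ (fun y hy => (hsqrtΨpos y hy).ne')
  -- differentiability of u at x₀ and the supporting affine function L
  have hudiff : DifferentiableAt ℝ u x₀ :=
    (huC1.differentiableOn one_ne_zero).differentiableAt (hΩo.mem_nhds hx₀)
  set F := fderiv ℝ u x₀ with hFdef
  set L : Esp n → ℝ := fun x => u x₀ + F (x - x₀) with hLdef
  have hLle : ∀ y ∈ Ω, L y ≤ u y := fun y hy =>
    support_lemma n huconv.convexOn hudiff.hasFDerivAt hx₀ hy
  -- the region {u ≥ Ψ} is inside K
  have hregK : ∀ y ∈ Ω, Ψ y ≤ u y → y ∈ K := by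
    intro y hy hle
    by_contra hyK
    have := hKnear y ⟨hy, hyK⟩
    have := hult y hy
    linarith
  -- the compact set C = {x ∈ K : Ψ x ≤ L x}
  set C : Set (Esp n) := {x ∈ K | Ψ x ≤ L x} with hCdef
  have hLc : Continuous L := by
    apply continuous_const.add
    exact F.continuous.comp (continuous_id.sub continuous_const)
  have hCclosed : IsClosed C := by
    have : C = K ∩ (fun x => Ψ x - L x) ⁻¹' Iic 0 := by
      ext y; simp [hCdef, sub_nonpos]
    rw [this]
    exact ContinuousOn.preimage_isClosed_of_isClosed
      ((hΨc.mono hKΩ).sub hLc.continuousOn) hKc.isClosed isClosed_Iic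
  have hCcomp : IsCompact C := hKc.of_isClosed_subset hCclosed (fun y hy => hy.1)
  have hCΩ : C ⊆ Ω := fun y hy => hKΩ hy.1
  have hx₀K : x₀ ∈ K := hregK x₀ hx₀ hΨx₀.le
  have hLx₀ : L x₀ = u x₀ := by simp [hLdef]
  have hx₀C : x₀ ∈ C := ⟨hx₀K, by rw [hLx₀]; exact hΨx₀.le⟩
  -- maximize L - Ψ on C
  obtain ⟨z, hzC, hzmax⟩ := hCcomp.exists_isMaxOn ⟨x₀, hx₀C⟩
    (hLc.continuousOn.sub (hΨc.mono hCΩ))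
  have hzΩ : z ∈ Ω := hCΩ hzC
  set c := u x₀ - Ψ x₀ with hcdef
  have hc : 0 < c := by simp [hcdef]; linarith
  have hzval : c ≤ L z - Ψ z := by
    have := hzmax hx₀C
    simp only [mem_setOf_eq] at this
    calc c = L x₀ - Ψ x₀ := by rw [hLx₀]
      _ ≤ L z - Ψ z := this
  -- the open set U = {x ∈ Ω : Ψ x < L x}
  set U : Set (Esp n) := Ω ∩ (fun x => Ψ x - L x) ⁻¹' Iio 0 with hUdef
  have hUopen : IsOpen U :=
    ContinuousOn.isOpen_inter_preimage (hΨc.sub hLc.continuousOn) hΩo isOpen_Iio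
  have hzU : z ∈ U := ⟨hzΩ, by simp [mem_preimage]; linarith⟩
  have hUC : U ⊆ C := by
    intro y hy
    obtain ⟨hyΩ, hyp⟩ := hy
    simp only [mem_preimage, mem_Iio, sub_neg] at hyp
    have hyu : Ψ y < u y := lt_of_lt_of_le hyp (hLle y hyΩ)
    exact ⟨hregK y hyΩ hyu.le, hyp.le⟩
  -- z is a local max of L - Ψ, so DΨ(z) = Du(x₀)
  have hlocmax : IsLocalMax (fun x => L x - Ψ x) z := by
    filter_upwards [hUopen.mem_nhds hzU] with y hy
    exact hzmax (hUC hy)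
  have hΨdiffz : DifferentiableAt ℝ Ψ z :=
    (hΨC1.differentiableOn one_ne_zero).differentiableAt (hΩo.mem_nhds hzΩ)
  have hLfderiv : HasFDerivAt L F z := by
    have h1 : HasFDerivAt (fun x : Esp n => F (x - x₀)) F z := by
      have := F.hasFDerivAt.comp z ((hasFDerivAt_id z).sub_const x₀)
      exact this
    simpa [hLdef] using h1.const_add (u x₀)
  have hzero : F - fderiv ℝ Ψ z = 0 := by
    have hdiff : HasFDerivAt (fun x => L x - Ψ x) (F - fderiv ℝ Ψ z) z :=
      hLfderiv.sub hΨdiffz.hasFDerivAt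
    exact hlocmax.hasFDerivAt_eq_zero hdiff
  have hfd_eq : fderiv ℝ Ψ z = F := by
    have := sub_eq_zero.1 hzero
    exact this.symm
  have hEgeq : EgradSq n Ψ z = EgradSq n u x₀ := by
    unfold EgradSq Egrad
    rw [hfd_eq, hFdef]
  -- z belongs to the set {y ∈ Ω | Ψ y < u y}
  have hzΨL : Ψ z < L z := by linarith
  have hzset : z ∈ {y ∈ Ω | Ψ y < u y} :=
    ⟨hzΩ, lt_of_lt_of_le hzΨL (hLle z hzΩ)⟩
  -- bounding the supremum from below
  have hbdd : BddAbove (f '' {y ∈ Ω | Ψ y < u y}) := by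
    have hsub : f '' {y ∈ Ω | Ψ y < u y} ⊆ f '' K := by
      apply image_mono
      intro y hy
      exact hregK y hy.1 hy.2.le
    exact (hKc.image_of_continuousOn (hfc.mono hKΩ)).bddAbove.mono hsub
  have hfz : f z ≤ sSup (f '' {y ∈ Ω | Ψ y < u y}) :=
    le_csSup hbdd (mem_image_of_mem f hzset)
  have hsq : 0 < Real.sqrt (1 - EgradSq n u x₀) :=
    Real.sqrt_pos.2 (by linarith [husp x₀ hx₀])
  have hcz : c ≤ ub z - Ψ z := by
    have h1 : L z ≤ u z := hLle z hzΩ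
    have h2 : u z < ub z := hult z hzΩ
    linarith
  have hfzval : c / Real.sqrt (1 - EgradSq n u x₀) ≤ f z := by
    have heq : f z = (ub z - Ψ z) / Real.sqrt (1 - EgradSq n u x₀) := by
      rw [hfdef]; simp only; rw [hEgeq]
    rw [heq]
    gcongr
  have hfinal : c / Real.sqrt (1 - EgradSq n u x₀) ≤
      sSup (f '' {y ∈ Ω | Ψ y < u y}) := hfzval.trans hfz
  have hkey : 1 / Real.sqrt (1 - EgradSq n u x₀) =
      (1 / c) * (c / Real.sqrt (1 - EgradSq n u x₀)) := by
    field_simp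
  rw [hkey]
  exact mul_le_mul_of_nonneg_left hfinal (by positivity)

end
end

section
/- Let k ≥ 1 be an integer and let z : (0,∞) → ℝ be a positive differentiable solution of the equation z′(r) = −A(r) z(r)^k + B(r), where A, B : (0,∞) → ℝ are continuous functions such that lim_{r→∞} A(r) = A₀ > 0 and lim_{r→∞} B(r) = B₀ > 0. Then lim_{r→∞} z(r) = (B₀/A₀)^{1/k}. -/
open Filter Set

/-- If `z' = g` on `[R, ∞)` and whenever `z r ≤ m` we have `g r ≥ c > 0`,
then eventually `z r ≥ m`. -/
lemma key_lemma (z g : ℝ → ℝ) (R m c : ℝ) (hc : 0 < c)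
    (hd : ∀ r, R ≤ r → HasDerivAt z (g r) r)
    (hgrow : ∀ r, R ≤ r → z r ≤ m → c ≤ g r) :
    ∀ᶠ r in atTop, m ≤ z r := by
  -- Step A : there is some r₀ ≥ R with z r₀ ≥ m
  have hstepA : ∃ r₀, R ≤ r₀ ∧ m ≤ z r₀ := by
    by_contra h
    push_neg at h
    have hg : ∀ r, R ≤ r → c ≤ g r := fun r hr => hgrow r hr (h r hr).le
    have hdw : ∀ r ∈ Ici R, HasDerivAt (fun x => z x - c * x) (g r - c) r := by
      intro r hr
      exact (hd r hr).sub (by simpa using (hasDerivAt_id r).const_mul c)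
    have hmono : MonotoneOn (fun x => z x - c * x) (Ici R) := by
      refine monotoneOn_of_deriv_nonneg (convex_Ici R)
        (fun r hr => (hdw r hr).continuousAt.continuousWithinAt)
        (fun r hr => (hdw r (interior_subset hr)).differentiableAt.differentiableWithinAt)
        (fun r hr => ?_)
      rw [(hdw r (interior_subset hr)).deriv]
      have := hg r (interior_subset hr)
      linarith
    set r₁ : ℝ := R + max 0 ((m + 1 - z R) / c) with hr₁
    have hRr₁ : R ≤ r₁ := le_add_of_nonneg_right (le_max_left _ _)
    have hw := hmono (self_mem_Ici) (mem_Ici.2 hRr₁) hRr₁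
    simp only at hw
    have h1 : c * (r₁ - R) ≥ m + 1 - z R := by
      have h2 : r₁ - R = max 0 ((m + 1 - z R) / c) := by rw [hr₁]; ring
      have h3 : (m + 1 - z R) / c ≤ r₁ - R := h2 ▸ le_max_right _ _
      calc m + 1 - z R = c * ((m + 1 - z R) / c) := by field_simp
        _ ≤ c * (r₁ - R) := by
            exact mul_le_mul_of_nonneg_left h3 hc.le
    have : m + 1 ≤ z r₁ := by nlinarith [hw]
    have := h r₁ hRr₁
    linarith
  obtain ⟨r₀, hr₀R, hr₀⟩ := hstepA
  -- Step B : barrier argument, z stays ≥ m after r₀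
  filter_upwards [eventually_ge_atTop r₀] with r₁ hr₁
  by_contra hlt
  push_neg at hlt
  have hr₀r₁ : r₀ < r₁ := by
    rcases eq_or_lt_of_le hr₁ with h | h
    · exact absurd hr₀ (by rw [h]; exact not_le.2 hlt)
    · exact h
  set S : Set ℝ := {t ∈ Icc r₀ r₁ | m ≤ z t} with hS
  have hcont : ContinuousOn z (Icc r₀ r₁) := fun t ht =>
    (hd t (hr₀R.trans ht.1)).continuousAt.continuousWithinAt
  have hSclosed : IsClosed S :=
    hcont.preimage_isClosed_of_isClosed isClosed_Icc isClosed_Ici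
  have hSne : S.Nonempty := ⟨r₀, ⟨le_refl _, hr₀r₁.le⟩, hr₀⟩
  have hSbdd : BddAbove S := ⟨r₁, fun t ht => ht.1.2⟩
  set s := sSup S with hs
  have hsS : s ∈ S := hSclosed.csSup_mem hSne hSbdd
  have hsr₁ : s < r₁ := lt_of_le_of_ne hsS.1.2 (fun h => by
    have := hsS.2; rw [h] at this; linarith)
  have hlt' : ∀ t, s < t → t ≤ r₁ → z t < m := by
    intro t hst htr₁
    by_contra hzt
    push_neg at hzt
    have : t ∈ S := ⟨⟨hsS.1.1.trans hst.le, htr₁⟩, hzt⟩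
    exact absurd (le_csSup hSbdd this) (not_le.2 hst)
  have hmonoz : StrictMonoOn z (Icc s r₁) := by
    refine strictMonoOn_of_deriv_pos (convex_Icc s r₁)
      (fun t ht => (hd t (hr₀R.trans (hsS.1.1.trans ht.1))).continuousAt.continuousWithinAt)
      (fun t ht => ?_)
    rw [interior_Icc] at ht
    rw [(hd t (hr₀R.trans (hsS.1.1.trans ht.1.le))).deriv]
    have := hgrow t (hr₀R.trans (hsS.1.1.trans ht.1.le))
      (hlt' t ht.1 ht.2.le).le
    linarith
  have : z s < z r₁ :=
    hmonoz (left_mem_Icc.2 hsr₁.le) (right_mem_Icc.2 hsr₁.le) hsr₁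
  have := hsS.2
  linarith

/-- if z' = -A(r)z^k + B(r) with z > 0 and A → A₀ > 0, B → B₀ > 0,
then z(r) → (B₀/A₀)^{1/k} as r → ∞. -/
theorem stmt14 (k : ℕ) (hk : 1 ≤ k)
    (z A B : ℝ → ℝ)
    (hzpos : ∀ r ∈ Ioi (0 : ℝ), 0 < z r)
    (hA : ContinuousOn A (Ioi 0)) (hB : ContinuousOn B (Ioi 0))
    (hode : ∀ r ∈ Ioi (0 : ℝ), HasDerivAt z (-A r * z r ^ k + B r) r)
    (A₀ B₀ : ℝ) (hA₀ : 0 < A₀) (hB₀ : 0 < B₀)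
    (hAlim : Tendsto A atTop (nhds A₀)) (hBlim : Tendsto B atTop (nhds B₀)) :
    Tendsto z atTop (nhds ((B₀ / A₀) ^ ((1 : ℝ) / (k : ℝ)))) := by
  have hk0 : (k : ℝ) ≠ 0 := Nat.cast_ne_zero.2 (by omega)
  set L : ℝ := (B₀ / A₀) ^ ((1 : ℝ) / (k : ℝ)) with hLdef
  have hdiv : (0 : ℝ) < B₀ / A₀ := div_pos hB₀ hA₀
  have hLpos : 0 < L := Real.rpow_pos_of_pos hdiv _
  have hLk : L ^ k = B₀ / A₀ := by
    rw [hLdef, ← Real.rpow_natCast ((B₀ / A₀) ^ ((1:ℝ)/(k:ℝ))) k,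
      ← Real.rpow_mul hdiv.le]
    rw [one_div_mul_cancel hk0, Real.rpow_one]
  rw [tendsto_order]
  constructor
  · -- lower bound: a < L → eventually a < z r
    intro a ha
    set m : ℝ := max (L / 2) ((a + L) / 2) with hm
    have hm0 : 0 < m := lt_of_lt_of_le (by linarith) (le_max_left _ _)
    have hmL : m < L := max_lt (by linarith) (by linarith)
    have ham : a < m := lt_of_lt_of_le (by linarith) (le_max_right _ _)
    have hmk : A₀ * m ^ k < B₀ := by
      have : m ^ k < L ^ k := pow_lt_pow_left₀ hmL hm0.le (by omega)
      rw [hLk] at this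
      calc A₀ * m ^ k < A₀ * (B₀ / A₀) := by
            exact mul_lt_mul_of_pos_left this hA₀
        _ = B₀ := by field_simp
    set c : ℝ := (B₀ - A₀ * m ^ k) / 2 with hcdef
    have hc : 0 < c := by rw [hcdef]; linarith
    have hφ : Tendsto (fun r => -A r * m ^ k + B r) atTop
        (nhds (-A₀ * m ^ k + B₀)) := by
      exact ((hAlim.neg.mul_const _).add hBlim)
    have hev1 : ∀ᶠ r in atTop, c < -A r * m ^ k + B r :=
      (tendsto_order.1 hφ).1 c (by rw [hcdef]; linarith)
    have hev2 : ∀ᶠ r in atTop, 0 < A r :=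
      (tendsto_order.1 hAlim).1 0 hA₀
    have hev3 : ∀ᶠ r in atTop, (0:ℝ) < r := eventually_gt_atTop 0
    obtain ⟨R, hR⟩ := eventually_atTop.1 ((hev1.and hev2).and hev3)
    have := key_lemma z (fun r => -A r * z r ^ k + B r) R m c hc
      (fun r hr => hode r (hR r hr).2)
      (fun r hr hzm => ?_)
    · filter_upwards [this] with r hr
      linarith
    · obtain ⟨⟨h1, h2⟩, h3⟩ := hR r hr
      have hzr : 0 < z r := hzpos r h3
      have : z r ^ k ≤ m ^ k := pow_le_pow_left₀ hzr.le hzm k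
      have : A r * z r ^ k ≤ A r * m ^ k :=
        mul_le_mul_of_nonneg_left this h2.le
      show c ≤ -A r * z r ^ k + B r
      linarith
  · -- upper bound: b > L → eventually z r < b
    intro b hb
    set M : ℝ := (L + b) / 2 with hM
    have hM0 : 0 < M := by rw [hM]; linarith
    have hLM : L < M := by rw [hM]; linarith
    have hMb : M < b := by rw [hM]; linarith
    have hMk : B₀ < A₀ * M ^ k := by
      have : L ^ k < M ^ k := pow_lt_pow_left₀ hLM hLpos.le (by omega)
      rw [hLk] at this
      calc B₀ = A₀ * (B₀ / A₀) := by field_simp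
        _ < A₀ * M ^ k := mul_lt_mul_of_pos_left this hA₀
    set c : ℝ := (A₀ * M ^ k - B₀) / 2 with hcdef
    have hc : 0 < c := by rw [hcdef]; linarith
    have hφ : Tendsto (fun r => -A r * M ^ k + B r) atTop
        (nhds (-A₀ * M ^ k + B₀)) := ((hAlim.neg.mul_const _).add hBlim)
    have hev1 : ∀ᶠ r in atTop, -A r * M ^ k + B r < -c :=
      (tendsto_order.1 hφ).2 (-c) (by rw [hcdef]; linarith)
    have hev2 : ∀ᶠ r in atTop, 0 < A r :=
      (tendsto_order.1 hAlim).1 0 hA₀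
    have hev3 : ∀ᶠ r in atTop, (0:ℝ) < r := eventually_gt_atTop 0
    obtain ⟨R, hR⟩ := eventually_atTop.1 ((hev1.and hev2).and hev3)
    have := key_lemma (fun r => -z r) (fun r => -(-A r * z r ^ k + B r)) R (-M) c hc
      (fun r hr => (hode r (hR r hr).2).neg)
      (fun r hr hzm => ?_)
    · filter_upwards [this] with r hr
      simp only [neg_le_neg_iff] at hr
      linarith
    · simp only [neg_le_neg_iff] at hzm
      obtain ⟨⟨h1, h2⟩, h3⟩ := hR r hr
      have : M ^ k ≤ z r ^ k := pow_le_pow_left₀ hM0.le hzm k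
      have : A r * M ^ k ≤ A r * z r ^ k :=
        mul_le_mul_of_nonneg_left this h2.le
      show c ≤ -(-A r * z r ^ k + B r)
      linarith
end

section
/- Let k ≥ 1 be an integer, let A₀ < 0 and B₀ > 0 be constants, and let z : (0,∞) → ℝ be a positive differentiable solution of the autonomous equation z′(r) = A₀ z(r)^k + B₀ for all r > 0. Then lim_{r→∞} z(r) = (−B₀/A₀)^{1/k}. -/
open Filter Set

/-- Auxiliary: a function differentiable on `Ioi 0` with nonpositive derivative on `Ici a`
(`0 < a`) is antitone on `Ici a`. -/
lemma aux_antitoneOn {g g' : ℝ → ℝ} {a : ℝ} (ha : 0 < a)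
    (hg : ∀ r ∈ Ioi (0 : ℝ), HasDerivAt g (g' r) r)
    (hg' : ∀ r, a ≤ r → g' r ≤ 0) : AntitoneOn g (Ici a) := by
  apply antitoneOn_of_deriv_nonpos (convex_Ici a)
  · intro x hx
    exact ((hg x (lt_of_lt_of_le ha hx)).continuousAt).continuousWithinAt
  · intro x hx
    rw [interior_Ici] at hx
    exact ((hg x (lt_trans ha hx)).differentiableAt).differentiableWithinAt
  · intro x hx
    rw [interior_Ici] at hx
    rw [(hg x (lt_trans ha hx)).deriv]
    exact hg' x hx.le

/-- if z' = A₀ z^k + B₀ with z > 0, A₀ < 0 and B₀ > 0 constants,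
then z(r) → (-B₀/A₀)^{1/k} as r → ∞. -/
theorem stmt15 (k : ℕ) (hk : 1 ≤ k)
    (A₀ B₀ : ℝ) (hA₀ : A₀ < 0) (hB₀ : 0 < B₀)
    (z : ℝ → ℝ)
    (hzpos : ∀ r ∈ Ioi (0 : ℝ), 0 < z r)
    (hode : ∀ r ∈ Ioi (0 : ℝ), HasDerivAt z (A₀ * z r ^ k + B₀) r) :
    Tendsto z atTop (nhds ((-B₀ / A₀) ^ ((1 : ℝ) / (k : ℝ)))) := by
  have hkR : (k : ℝ) ≠ 0 := by positivity
  set L : ℝ := (-B₀ / A₀) ^ ((1 : ℝ) / (k : ℝ)) with hLdef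
  have hquo : 0 < -B₀ / A₀ := div_pos_of_neg_of_neg (by linarith) hA₀
  have hLpos : 0 < L := Real.rpow_pos_of_pos hquo _
  have hLk : L ^ k = -B₀ / A₀ := by
    rw [hLdef, ← Real.rpow_natCast ((-B₀ / A₀) ^ ((1:ℝ)/(k:ℝ))) k,
      ← Real.rpow_mul hquo.le, one_div, inv_mul_cancel₀ hkR, Real.rpow_one]
  have hfL : A₀ * L ^ k + B₀ = 0 := by
    have hA0' : A₀ ≠ 0 := hA₀.ne
    rw [hLk]
    field_simp
    ring
  -- strict sign of (x - L) * f x for x ≥ 0, x ≠ L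
  have keylt : ∀ x : ℝ, 0 ≤ x → x ≠ L → (x - L) * (A₀ * x ^ k + B₀) < 0 := by
    intro x hx hne
    rcases lt_or_gt_of_ne hne with h | h
    · have hp : x ^ k < L ^ k := pow_lt_pow_left₀ h hx (by omega)
      have : 0 < A₀ * x ^ k + B₀ := by nlinarith
      exact mul_neg_of_neg_of_pos (by linarith) this
    · have hp : L ^ k < x ^ k := pow_lt_pow_left₀ h hLpos.le (by omega)
      have : A₀ * x ^ k + B₀ < 0 := by nlinarith
      exact mul_neg_of_pos_of_neg (by linarith) this
  have key : ∀ x : ℝ, 0 ≤ x → (x - L) * (A₀ * x ^ k + B₀) ≤ 0 := by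
    intro x hx
    rcases eq_or_ne x L with rfl | hne
    · simp [hfL]
    · exact (keylt x hx hne).le
  -- the Lyapunov function
  set V : ℝ → ℝ := fun r => (z r - L) ^ 2 with hVdef
  have hVnonneg : ∀ r, 0 ≤ V r := fun r => sq_nonneg _
  set V' : ℝ → ℝ := fun r => 2 * (z r - L) * (A₀ * z r ^ k + B₀) with hV'def
  have hVderiv : ∀ r ∈ Ioi (0 : ℝ), HasDerivAt V (V' r) r := by
    intro r hr
    have h1 : HasDerivAt (fun r => z r - L) (A₀ * z r ^ k + B₀) r :=
      (hode r hr).sub_const L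
    have := h1.pow 2
    simpa [hV'def, hVdef, Pi.pow_def, mul_comm, mul_assoc, mul_left_comm] using this
  have hV'nonpos : ∀ r, (1:ℝ) ≤ r → V' r ≤ 0 := by
    intro r hr
    have hz := (hzpos r (by norm_num; linarith)).le
    have := key (z r) hz
    simp only [hV'def]
    nlinarith
  have hVanti : AntitoneOn V (Ici (1:ℝ)) := aux_antitoneOn one_pos hVderiv hV'nonpos
  -- the infimum of V on [1, ∞)
  set c : ℝ := sInf (V '' Ici 1) with hcdef
  have hne : (V '' Ici (1:ℝ)).Nonempty := ⟨V 1, ⟨1, self_mem_Ici, rfl⟩⟩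
  have hbdd : BddBelow (V '' Ici (1:ℝ)) := ⟨0, by rintro x ⟨r, _, rfl⟩; exact hVnonneg r⟩
  have hc0 : 0 ≤ c := le_csInf hne (by rintro x ⟨r, _, rfl⟩; exact hVnonneg r)
  have hcle : ∀ r, (1:ℝ) ≤ r → c ≤ V r := fun r hr => csInf_le hbdd ⟨r, hr, rfl⟩
  -- c must be 0
  have hc : c = 0 := by
    by_contra hcne
    have hcpos : 0 < c := lt_of_le_of_ne hc0 (Ne.symm hcne)
    set M : ℝ := L + Real.sqrt (V 1) with hMdef
    have hzK : ∀ r, (1:ℝ) ≤ r → z r ∈ Icc (0:ℝ) M ∩ {x | c ≤ (x - L) ^ 2} := by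
      intro r hr
      have hzr := hzpos r (by norm_num; linarith)
      have hVle : V r ≤ V 1 := hVanti (self_mem_Ici) hr hr
      have h1 : z r - L ≤ Real.sqrt (V 1) := by
        calc z r - L ≤ |z r - L| := le_abs_self _
          _ = Real.sqrt (V r) := (Real.sqrt_sq_eq_abs _).symm
          _ ≤ Real.sqrt (V 1) := Real.sqrt_le_sqrt hVle
      exact ⟨⟨hzr.le, by simp only [hMdef]; linarith⟩, hcle r hr⟩
    -- compact set and max of the derivative function
    set K : Set ℝ := Icc (0:ℝ) M ∩ {x | c ≤ (x - L) ^ 2} with hKdef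
    have hKcomp : IsCompact K :=
      (isCompact_Icc).inter_right (isClosed_le continuous_const ((continuous_id.sub continuous_const).pow 2))
    have hKne : K.Nonempty := ⟨z 1, hzK 1 le_rfl⟩
    set h : ℝ → ℝ := fun x => 2 * (x - L) * (A₀ * x ^ k + B₀) with hhdef
    have hhcont : ContinuousOn h K := ((continuous_const.mul (continuous_id.sub continuous_const)).mul ((continuous_const.mul (continuous_pow k)).add continuous_const)).continuousOn
    obtain ⟨x₀, hx₀K, hx₀max⟩ := hKcomp.exists_isMaxOn hKne hhcont
    have hx₀neg : h x₀ < 0 := by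
      have hx0 : x₀ ≠ L := by
        intro h'
        rw [h'] at hx₀K
        have := hx₀K.2
        simp at this
        linarith
      have := keylt x₀ hx₀K.1.1 hx0
      simp only [hhdef]; nlinarith
    set δ : ℝ := -h x₀ with hδdef
    have hδpos : 0 < δ := by simp [hδdef]; linarith
    -- W r = V r + δ r is antitone on [1, ∞)
    set W : ℝ → ℝ := fun r => V r + δ * r with hWdef
    have hWderiv : ∀ r ∈ Ioi (0:ℝ), HasDerivAt W (V' r + δ) r := by
      intro r hr
      exact (hVderiv r hr).add ((hasDerivAt_id r).const_mul δ |>.congr_deriv (mul_one δ))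
    have hWanti : AntitoneOn W (Ici (1:ℝ)) := by
      apply aux_antitoneOn one_pos hWderiv
      intro r hr
      have hmem := hzK r hr
      have := hx₀max hmem
      simp only [hhdef, hV'def, hδdef, Set.mem_setOf_eq] at this ⊢
      linarith [this]
    -- contradiction for large r
    set R : ℝ := (V 1 + δ + 1) / δ + 1 with hRdef
    have hR1 : (1:ℝ) ≤ R := by
      have : 0 ≤ (V 1 + δ + 1) / δ := by positivity
      simp only [hRdef]; linarith
    have hWle : W R ≤ W 1 := hWanti self_mem_Ici hR1 hR1
    have : δ * R = V 1 + δ + 1 + δ := by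
      simp only [hRdef]; field_simp
    have hVR := hVnonneg R
    simp only [hWdef] at hWle
    nlinarith
  -- V tends to 0
  have hVto : Tendsto V atTop (nhds 0) := by
    rw [tendsto_order]
    constructor
    · intro b hb
      exact Eventually.of_forall fun r => lt_of_lt_of_le hb (hVnonneg r)
    · intro b hb
      have : sInf (V '' Ici 1) < b := by rw [← hcdef, hc]; exact hb
      obtain ⟨x, ⟨r₁, hr₁, rfl⟩, hxb⟩ := exists_lt_of_csInf_lt hne this
      filter_upwards [eventually_ge_atTop r₁] with r hr
      exact lt_of_le_of_lt (hVanti hr₁ (le_trans hr₁ hr) hr) hxb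
  -- conclude
  have hsq : Tendsto (fun r => Real.sqrt (V r)) atTop (nhds 0) := by
    have := (Real.continuous_sqrt.tendsto 0).comp hVto
    rwa [Real.sqrt_zero] at this
  rw [tendsto_iff_dist_tendsto_zero]
  refine hsq.congr fun r => ?_
  simp only [hVdef, Real.sqrt_sq_eq_abs, Real.dist_eq]
end

section
/- Let 𝒞 > 1 and 𝒞̃ = √(1 − 1/𝒞²). Let Ω ⊂ ℝⁿ be a bounded open set and let u, ū, Ψ : Ω → ℝ be C¹ functions that are strictly 𝒞-spacelike, i.e. |Du|, |Dū|, |DΨ| < 𝒞̃ on Ω. Assume u is strictly convex, u ≤ ū in Ω, and Ψ > ū near ∂Ω. Then for every x in the set {u > Ψ} = {y ∈ Ω : u(y) > Ψ(y)}, one has 1/√(𝒞̃²−|Du(x)|²) ≤ (1/(u(x)−Ψ(x))) · sup_{{u>Ψ}} (ū−Ψ)/√(𝒞̃²−|DΨ|²). -/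
open Filter Real Set Metric Bornology

noncomputable section

/-- 𝒞̃ = √(1 - 1/𝒞²). -/
def Ctil (𝒞 : ℝ) : ℝ := Real.sqrt (1 - 1 / 𝒞 ^ 2)

open Topology

lemma egrad_fderiv_apply {n : ℕ} (f : Esp n → ℝ) (x : Esp n) (v : Esp n) :
    fderiv ℝ f x v = ∑ i, v i * Egrad n f x i := by
  have hv : v = ∑ i, v i • EuclideanSpace.single i (1:ℝ) := by
    ext j
    rw [WithLp.ofLp_sum, Finset.sum_apply]
    simp [EuclideanSpace.single_apply]
  conv_lhs => rw [hv]
  rw [map_sum]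
  simp [Egrad]

lemma egradSq_nonneg {n : ℕ} (f : Esp n → ℝ) (x : Esp n) : 0 ≤ EgradSq n f x :=
  Finset.sum_nonneg fun _ _ => sq_nonneg _

lemma fderiv_apply_le {n : ℕ} (f : Esp n → ℝ) (x : Esp n) (v : Esp n) :
    fderiv ℝ f x v ≤ Real.sqrt (EgradSq n f x) * ‖v‖ := by
  rw [egrad_fderiv_apply]
  have hCS := Finset.sum_mul_sq_le_sq_mul_sq Finset.univ (fun i => v i) (fun i => Egrad n f x i)
  calc ∑ i, v i * Egrad n f x i ≤ |∑ i, v i * Egrad n f x i| := le_abs_self _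
    _ = Real.sqrt ((∑ i, v i * Egrad n f x i) ^ 2) := (Real.sqrt_sq_eq_abs _).symm
    _ ≤ Real.sqrt ((∑ i, v i ^ 2) * ∑ i, Egrad n f x i ^ 2) := Real.sqrt_le_sqrt hCS
    _ = Real.sqrt (EgradSq n f x) * ‖v‖ := by
        rw [Real.sqrt_mul (Finset.sum_nonneg fun _ _ => sq_nonneg _), EuclideanSpace.norm_eq]
        simp only [Real.norm_eq_abs, sq_abs]
        rw [EgradSq]
        ring

lemma norm_of_coords {n : ℕ} (v : Esp n) : ‖v‖ = Real.sqrt (∑ i, v i ^ 2) := by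
  rw [EuclideanSpace.norm_eq]; simp [sq_abs]


/-- local gradient estimate for strictly 𝒞-spacelike strictly
convex graphs (translating soliton version of the Bayard–Schnürer estimate). -/
theorem stmt16 (n : ℕ) (hn : 1 ≤ n) (𝒞 : ℝ) (h𝒞 : 1 < 𝒞)
    (Ω : Set (Esp n)) (hΩo : IsOpen Ω) (hΩb : IsBounded Ω)
    (u ub Ψ : Esp n → ℝ)
    (huC1 : ContDiffOn ℝ 1 u Ω) (hubC1 : ContDiffOn ℝ 1 ub Ω) (hΨC1 : ContDiffOn ℝ 1 Ψ Ω)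
    (husp : ∀ x ∈ Ω, Real.sqrt (EgradSq n u x) < Ctil 𝒞)
    (hubsp : ∀ x ∈ Ω, Real.sqrt (EgradSq n ub x) < Ctil 𝒞)
    (hΨsp : ∀ x ∈ Ω, Real.sqrt (EgradSq n Ψ x) < Ctil 𝒞)
    (huconv : StrictConvexOn ℝ Ω u)
    (hule : ∀ x ∈ Ω, u x ≤ ub x)
    (hnear : ∃ K : Set (Esp n), IsCompact K ∧ K ⊆ Ω ∧ ∀ x ∈ Ω \ K, ub x < Ψ x) :
    ∀ x ∈ Ω, Ψ x < u x →
      1 / Real.sqrt (Ctil 𝒞 ^ 2 - EgradSq n u x) ≤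
        (1 / (u x - Ψ x)) *
          sSup ((fun y => (ub y - Ψ y) / Real.sqrt (Ctil 𝒞 ^ 2 - EgradSq n Ψ y)) ''
            {y ∈ Ω | Ψ y < u y}) := by
  intro x hxΩ hxΨ
  set C := Ctil 𝒞 with hCdef
  have hC0 : 0 < C := by
    apply Real.sqrt_pos.2
    have h1 : 1 / 𝒞 ^ 2 < 1 := by
      rw [div_lt_one (by positivity)]
      nlinarith
    linarith
  have hdiffu : ∀ y ∈ Ω, DifferentiableAt ℝ u y := fun y hy =>
    (huC1.differentiableOn one_ne_zero).differentiableAt (hΩo.mem_nhds hy)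
  have hdiffΨ : ∀ y ∈ Ω, DifferentiableAt ℝ Ψ y := fun y hy =>
    (hΨC1.differentiableOn one_ne_zero).differentiableAt (hΩo.mem_nhds hy)
  have hcontu : ContinuousOn u Ω := huC1.continuousOn
  have hcontΨ : ContinuousOn Ψ Ω := hΨC1.continuousOn
  have hEΨlt : ∀ y ∈ Ω, EgradSq n Ψ y < C ^ 2 := by
    intro y hy
    have h1 := hΨsp y hy
    calc EgradSq n Ψ y = Real.sqrt (EgradSq n Ψ y) ^ 2 :=
          (Real.sq_sqrt (egradSq_nonneg Ψ y)).symm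
      _ < C ^ 2 := by nlinarith [Real.sqrt_nonneg (EgradSq n Ψ y)]
  have hEult : EgradSq n u x < C ^ 2 := by
    have h1 := husp x hxΩ
    calc EgradSq n u x = Real.sqrt (EgradSq n u x) ^ 2 :=
          (Real.sq_sqrt (egradSq_nonneg u x)).symm
      _ < C ^ 2 := by nlinarith [Real.sqrt_nonneg (EgradSq n u x)]
  have hden : ∀ y ∈ Ω, 0 < Real.sqrt (C ^ 2 - EgradSq n Ψ y) := fun y hy =>
    Real.sqrt_pos.2 (sub_pos.2 (hEΨlt y hy))
  have hdenu : 0 < Real.sqrt (C ^ 2 - EgradSq n u x) :=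
    Real.sqrt_pos.2 (sub_pos.2 hEult)
  set S : Set (Esp n) := {y ∈ Ω | Ψ y < u y} with hSdef
  set F : Esp n → ℝ := fun y => (ub y - Ψ y) / Real.sqrt (C ^ 2 - EgradSq n Ψ y) with hFdef
  set M := sSup (F '' S) with hMdef
  have hxS : x ∈ S := ⟨hxΩ, hxΨ⟩
  obtain ⟨K, hKc, hKΩ, hKout⟩ := hnear
  have hSK : S ⊆ K := by
    intro y hy
    by_contra hyK
    have h1 := hKout y ⟨hy.1, hyK⟩
    have h2 := hule y hy.1
    have h3 := hy.2
    linarith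
  -- continuity of F on Ω
  have hfdc : ContinuousOn (fderiv ℝ Ψ) Ω := hΨC1.continuousOn_fderiv_of_isOpen hΩo le_rfl
  have hEc : ContinuousOn (fun y => EgradSq n Ψ y) Ω := by
    apply continuousOn_finset_sum
    intro i _
    exact (hfdc.clm_apply continuousOn_const).pow 2
  have hFc : ContinuousOn F Ω := by
    apply ContinuousOn.div (hubC1.continuousOn.sub hcontΨ)
    · exact Real.continuous_sqrt.comp_continuousOn (continuousOn_const.sub hEc)
    · exact fun y hy => (hden y hy).ne'
  have hclS : closure S ⊆ K := closure_minimal hSK hKc.isClosed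
  have hclΩ : closure S ⊆ Ω := hclS.trans hKΩ
  have hcompS : IsCompact (closure S) := hKc.of_isClosed_subset isClosed_closure hclS
  have hFb : BddAbove (F '' S) :=
    ((hcompS.image_of_continuousOn (hFc.mono hclΩ)).bddAbove).mono
      (image_mono (f := F) subset_closure)
  have hM : ∀ y ∈ S, F y ≤ M := fun y hy => le_csSup hFb ⟨y, hy, rfl⟩
  have hKey : ∀ y ∈ S, u y - Ψ y ≤ M * Real.sqrt (C ^ 2 - EgradSq n Ψ y) := by
    intro y hy
    have h1 := hM y hy
    rw [hFdef] at h1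
    have h2 := (div_le_iff₀ (hden y hy.1)).1 h1
    have h3 := hule y hy.1
    linarith
  have hd0 : 0 < u x - Ψ x := sub_pos.2 hxΨ
  have hM0 : 0 < M := by
    have h1 : 0 < F x := div_pos (by have := hule x hxΩ; linarith) (hden x hxΩ)
    exact lt_of_lt_of_le h1 (hM x hxS)
  -- reduce the goal
  rw [show (1:ℝ) / (u x - Ψ x) * M = M / (u x - Ψ x) by ring,
    div_le_div_iff₀ hdenu hd0, one_mul]
  by_contra hcon
  push_neg at hcon
  -- key: on points of S where u - Ψ ≥ d, the gradient of Ψ is smaller than that of u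
  have hqlt : ∀ y ∈ S, u x - Ψ x ≤ u y - Ψ y → EgradSq n Ψ y < EgradSq n u x := by
    intro y hy hdy
    have h1 : u x - Ψ x ≤ M * Real.sqrt (C ^ 2 - EgradSq n Ψ y) := le_trans hdy (hKey y hy)
    have h2 : M * Real.sqrt (C ^ 2 - EgradSq n u x) <
        M * Real.sqrt (C ^ 2 - EgradSq n Ψ y) := lt_of_lt_of_le hcon h1
    have h3 : Real.sqrt (C ^ 2 - EgradSq n u x) < Real.sqrt (C ^ 2 - EgradSq n Ψ y) :=
      lt_of_mul_lt_mul_left h2 hM0.le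
    by_contra hge
    push_neg at hge
    have h4 : Real.sqrt (C ^ 2 - EgradSq n Ψ y) ≤ Real.sqrt (C ^ 2 - EgradSq n u x) :=
      Real.sqrt_le_sqrt (by linarith)
    linarith
  have hp0 : 0 < EgradSq n u x := lt_of_le_of_lt (egradSq_nonneg Ψ x) (hqlt x hxS le_rfl)
  set p := Real.sqrt (EgradSq n u x) with hpdef
  have hp : 0 < p := Real.sqrt_pos.2 hp0
  have hpsq : p ^ 2 = EgradSq n u x := Real.sq_sqrt (egradSq_nonneg u x)
  set g : Esp n := (show Esp n from WithLp.toLp 2 fun i => Egrad n u x i) with hgdef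
  have hgi : ∀ i, g i = Egrad n u x i := fun _ => rfl
  set e : Esp n := p⁻¹ • g with hedef
  have hei : ∀ i, e i = p⁻¹ * Egrad n u x i := fun _ => rfl
  have hnorme : ‖e‖ = 1 := by
    rw [norm_of_coords]
    have h1 : ∑ i, e i ^ 2 = p⁻¹ ^ 2 * EgradSq n u x := by
      simp only [hei, EgradSq, Finset.mul_sum]
      congr 1
      ext i
      ring
    rw [h1, ← hpsq]
    rw [show p⁻¹ ^ 2 * p ^ 2 = 1 by field_simp]
    exact Real.sqrt_one
  have hfue : fderiv ℝ u x e = p := by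
    rw [egrad_fderiv_apply]
    have h1 : ∑ i, e i * Egrad n u x i = p⁻¹ * EgradSq n u x := by
      simp only [hei, EgradSq, Finset.mul_sum]
      congr 1
      ext i
      ring
    rw [h1, ← hpsq]
    field_simp
  have hΨe : ∀ y, fderiv ℝ Ψ y e ≤ Real.sqrt (EgradSq n Ψ y) := by
    intro y
    have := fderiv_apply_le Ψ y e
    rwa [hnorme, mul_one] at this
  set γ : ℝ → Esp n := fun t => x + t • e with hγdef
  have hγcont : Continuous γ := continuous_const.add (continuous_id.smul continuous_const)
  have hγ0 : γ 0 = x := by simp [hγdef]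
  have hγdist : ∀ t, ‖γ t - x‖ = |t| := by
    intro t
    simp [hγdef, add_sub_cancel_left, norm_smul, hnorme]
  obtain ⟨r, hr⟩ := hΩb.subset_ball x
  set A := {t : ℝ | 0 ≤ t ∧ ∀ s ∈ Icc 0 t, γ s ∈ S} with hAdef
  have h0A : (0:ℝ) ∈ A := by
    refine ⟨le_rfl, fun s hs => ?_⟩
    have hs0 : s = 0 := le_antisymm hs.2 hs.1
    rw [hs0, hγ0]; exact hxS
  have hAne : A.Nonempty := ⟨0, h0A⟩
  have hAbdd : BddAbove A := by
    refine ⟨r, fun t ht => ?_⟩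
    have h1 : γ t ∈ Ω := (ht.2 t ⟨ht.1, le_rfl⟩).1
    have h2 := hr h1
    rw [mem_ball, dist_eq_norm] at h2
    calc t ≤ |t| := le_abs_self t
      _ = ‖γ t - x‖ := (hγdist t).symm
      _ ≤ r := h2.le
  set T := sSup A with hTdef
  have hT0 : 0 ≤ T := le_csSup hAbdd h0A
  have hbelow : ∀ s, 0 ≤ s → s < T → γ s ∈ S := by
    intro s hs0 hsT
    obtain ⟨t, htA, hst⟩ := exists_lt_of_lt_csSup hAne hsT
    exact htA.2 s ⟨hs0, hst.le⟩
  have hγTK : γ T ∈ K := by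
    rcases eq_or_lt_of_le hT0 with h|h
    · rw [← h, hγ0]; exact hSK hxS
    · have htend : Tendsto γ (𝓝[<] T) (𝓝 (γ T)) :=
        (hγcont.tendsto T).mono_left nhdsWithin_le_nhds
      have hev : ∀ᶠ s in 𝓝[<] T, γ s ∈ K := by
        filter_upwards [Ioo_mem_nhdsLT_of_mem (⟨h, le_rfl⟩ : T ∈ Ioc 0 T)] with s hs
        exact hSK (hbelow s hs.1.le hs.2)
      exact hKc.isClosed.mem_of_tendsto htend hev
  have hγTΩ : γ T ∈ Ω := hKΩ hγTK
  have hSopen : IsOpen S := by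
    have hSeq : S = Ω ∩ (fun y => u y - Ψ y) ⁻¹' Ioi 0 := by
      ext y
      simp only [hSdef, mem_sep_iff, mem_inter_iff, mem_preimage, mem_Ioi, sub_pos]
    rw [hSeq]
    exact (hcontu.sub hcontΨ).isOpen_inter_preimage hΩo isOpen_Ioi
  have hγTnS : γ T ∉ S := by
    intro hTS
    have hpre : IsOpen (γ ⁻¹' S) := hSopen.preimage hγcont
    obtain ⟨δ, hδ0, hδ⟩ := Metric.isOpen_iff.1 hpre T hTS
    have hTA : T + δ / 2 ∈ A := by
      refine ⟨by linarith, fun s hs => ?_⟩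
      rcases lt_or_ge s T with h'|h'
      · exact hbelow s hs.1 h'
      · apply hδ
        rw [mem_ball, Real.dist_eq, abs_of_nonneg (by linarith)]
        have := hs.2
        linarith
    have := le_csSup hAbdd hTA
    linarith
  have hTpos : 0 < T := by
    rcases eq_or_lt_of_le hT0 with h|h
    · exfalso; apply hγTnS; rw [← h, hγ0]; exact hxS
    · exact h
  have hγTle : u (γ T) ≤ Ψ (γ T) := by
    by_contra hlt
    push_neg at hlt
    exact hγTnS ⟨hγTΩ, hlt⟩
  -- supporting hyperplane along the ray
  have hsupp : ∀ t, 0 < t → γ t ∈ Ω → u x + t * p ≤ u (γ t) := by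
    intro t ht hγtΩ
    set L : ℝ →ᵃ[ℝ] Esp n := AffineMap.lineMap x (x + e) with hL
    have hLeq : ∀ s, L s = γ s := by
      intro s
      simp only [hL, AffineMap.lineMap_apply, hγdef, vsub_eq_sub, vadd_eq_add,
        add_sub_cancel_left]
      exact add_comm _ _
    have hconv : ConvexOn ℝ (L ⁻¹' Ω) (u ∘ L) := (huconv.convexOn).comp_affineMap L
    have h0m : (0:ℝ) ∈ L ⁻¹' Ω := by
      rw [mem_preimage, hLeq 0, hγ0]; exact hxΩ
    have htm : t ∈ L ⁻¹' Ω := by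
      rw [mem_preimage, hLeq t]; exact hγtΩ
    have huL : u ∘ L = fun s => u (γ s) := by
      funext s; simp [Function.comp, hLeq]
    have hd : HasDerivAt (u ∘ L) p 0 := by
      have h1 : HasDerivAt γ e 0 := by
        simpa [hγdef] using ((hasDerivAt_id (0:ℝ)).smul_const e).const_add x
      have h2 : HasDerivAt (fun s => u (γ s)) (fderiv ℝ u (γ 0) e) 0 :=
        (hdiffu (γ 0) (by rw [hγ0]; exact hxΩ)).hasFDerivAt.comp_hasDerivAt 0 h1
      rw [hγ0, hfue] at h2
      rw [huL]
      exact h2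
    have hslope := hconv.le_slope_of_hasDerivAt h0m htm ht hd
    rw [slope_def_field] at hslope
    simp only [huL] at hslope
    rw [hγ0, sub_zero] at hslope
    have h3 := (le_div_iff₀ ht).1 hslope
    linarith
  set h : ℝ → ℝ := fun t => u x + t * p - Ψ (γ t) with hhdef
  have hh0 : h 0 = u x - Ψ x := by simp [hhdef, hγ0]
  have hhd : ∀ t, γ t ∈ Ω → HasDerivAt h (p - fderiv ℝ Ψ (γ t) e) t := by
    intro t htΩ
    have h1 : HasDerivAt γ e t := by
      simpa [hγdef] using ((hasDerivAt_id t).smul_const e).const_add x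
    have h2 : HasDerivAt (fun s => Ψ (γ s)) (fderiv ℝ Ψ (γ t) e) t :=
      (hdiffΨ (γ t) htΩ).hasFDerivAt.comp_hasDerivAt t h1
    have h3 : HasDerivAt (fun s : ℝ => u x + s * p) p t := by
      simpa using ((hasDerivAt_id t).mul_const p).const_add (u x)
    exact h3.sub h2
  have hγIcc : ∀ s ∈ Icc (0:ℝ) T, γ s ∈ Ω := by
    intro s hs
    rcases lt_or_eq_of_le hs.2 with h'|h'
    · exact (hbelow s hs.1 h').1
    · rw [h']; exact hγTΩ
  have hhcont : ContinuousOn h (Icc 0 T) := fun s hs =>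
    ((hhd s (hγIcc s hs)).continuousAt).continuousWithinAt
  have hhT : h T ≤ 0 := by
    have h1 := hsupp T hTpos hγTΩ
    have h2 := hγTle
    simp only [hhdef]
    linarith
  -- barrier argument
  have hbar : ∀ t ∈ Icc (0:ℝ) T, u x - Ψ x ≤ h t := by
    by_contra hB
    push_neg at hB
    obtain ⟨t₀, ht₀I, ht₀⟩ := hB
    set B := {t | t ∈ Icc (0:ℝ) T ∧ h t < u x - Ψ x} with hBdef
    have hBne : B.Nonempty := ⟨t₀, ht₀I, ht₀⟩
    have hBbdd : BddBelow B := ⟨0, fun t ht => ht.1.1⟩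
    set t₁ := sInf B with ht₁def
    have ht₁cl : t₁ ∈ closure B := csInf_mem_closure hBne hBbdd
    have hBIcc : B ⊆ Icc 0 T := fun t ht => ht.1
    have ht₁I : t₁ ∈ Icc (0:ℝ) T := isClosed_Icc.closure_subset ((closure_mono hBIcc) ht₁cl)
    have hnb : (𝓝[B] t₁).NeBot := mem_closure_iff_nhdsWithin_neBot.1 ht₁cl
    have htend : Tendsto h (𝓝[B] t₁) (𝓝 (h t₁)) :=
      (hhcont t₁ ht₁I).mono_left (nhdsWithin_mono t₁ hBIcc)
    have hle : h t₁ ≤ u x - Ψ x :=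
      le_of_tendsto htend (eventually_nhdsWithin_of_forall fun s hs => hs.2.le)
    have hge : u x - Ψ x ≤ h t₁ := by
      rcases eq_or_lt_of_le ht₁I.1 with h0|h0
      · rw [← h0, hh0]
      · have hIcoIcc : Ico (0:ℝ) t₁ ⊆ Icc 0 T := fun s hs =>
          ⟨hs.1, hs.2.le.trans ht₁I.2⟩
        have hnb2 : (𝓝[Ico (0:ℝ) t₁] t₁).NeBot := by
          apply mem_closure_iff_nhdsWithin_neBot.1
          rw [closure_Ico h0.ne]
          exact ⟨h0.le, le_rfl⟩
        have htendl : Tendsto h (𝓝[Ico (0:ℝ) t₁] t₁) (𝓝 (h t₁)) :=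
          (hhcont t₁ ht₁I).mono_left (nhdsWithin_mono t₁ hIcoIcc)
        apply ge_of_tendsto htendl
        apply eventually_nhdsWithin_of_forall
        intro s hs
        by_contra hsd
        push_neg at hsd
        have hsB : s ∈ B := ⟨⟨hs.1, hs.2.le.trans ht₁I.2⟩, hsd⟩
        have := csInf_le hBbdd hsB
        exact absurd hs.2 (not_lt.2 this)
    have ht₁eq : h t₁ = u x - Ψ x := le_antisymm hle hge
    have hTB : T ∈ B := ⟨⟨hT0, le_rfl⟩, by linarith⟩
    have ht₁T : t₁ < T := by
      have hle' : t₁ ≤ T := csInf_le hBbdd hTB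
      rcases lt_or_eq_of_le hle' with h'|h'
      · exact h'
      · exfalso; rw [h'] at ht₁eq; linarith
    have hγt₁S : γ t₁ ∈ S := hbelow t₁ ht₁I.1 ht₁T
    have hsupp₁ : u x - Ψ x ≤ u (γ t₁) - Ψ (γ t₁) := by
      rcases eq_or_lt_of_le ht₁I.1 with h0|h0
      · rw [← h0, hγ0]
      · have h1 := hsupp t₁ h0 hγt₁S.1
        have h2 : h t₁ ≤ u (γ t₁) - Ψ (γ t₁) := by
          simp only [hhdef]; linarith
        linarith [ht₁eq ▸ h2]
    have hq : EgradSq n Ψ (γ t₁) < EgradSq n u x := hqlt (γ t₁) hγt₁S hsupp₁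
    have hq' : fderiv ℝ Ψ (γ t₁) e < p :=
      lt_of_le_of_lt (hΨe (γ t₁)) (Real.sqrt_lt_sqrt (egradSq_nonneg Ψ _) hq)
    have hder := hhd t₁ hγt₁S.1
    have hder0 : 0 < p - fderiv ℝ Ψ (γ t₁) e := by linarith
    have hev : ∀ᶠ s in 𝓝[>] t₁, h t₁ < h s := by
      have hslope := hasDerivAt_iff_tendsto_slope.1 hder
      have h1 : ∀ᶠ s in 𝓝[≠] t₁, 0 < slope h t₁ s :=
        hslope.eventually (eventually_gt_nhds hder0)
      have h2 : ∀ᶠ s in 𝓝[>] t₁, 0 < slope h t₁ s :=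
        h1.filter_mono (nhdsWithin_mono t₁ (fun s hs => ne_of_gt hs))
      filter_upwards [h2, self_mem_nhdsWithin] with s hs hs'
      rw [slope_def_field] at hs
      have hst : 0 < s - t₁ := sub_pos.2 hs'
      have := mul_pos hs hst
      rw [div_mul_cancel₀ _ (ne_of_gt hst)] at this
      linarith
    have hBsub : B ⊆ Ioi t₁ := by
      intro s hs
      rcases lt_or_ge t₁ s with h'|h'
      · exact h'
      · exfalso
        have h1 := csInf_le hBbdd hs
        have h2 : s = t₁ := le_antisymm h' h1
        rw [h2] at hs
        have := hs.2
        linarith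
    have hev2 : ∀ᶠ s in 𝓝[B] t₁, h t₁ < h s := hev.filter_mono (nhdsWithin_mono t₁ hBsub)
    have hev3 : ∀ᶠ s in 𝓝[B] t₁, h s < u x - Ψ x :=
      eventually_nhdsWithin_of_forall fun s hs => hs.2
    obtain ⟨s, hs1, hs2⟩ := (hev2.and hev3).exists
    rw [ht₁eq] at hs1
    linarith
  have hfinal := hbar T ⟨hT0, le_rfl⟩
  linarith

end
end
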